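/- Let x̃ ∈ ℂ with x̃ ≠ 0 and let ρ̃ ∈ ℝ. Let w ∈ ℂ satisfy w² = (|x̃|² + 1 − ρ̃²)² − 4|x̃|², and define α = (|x̃|² + 1 − ρ̃² + w)/(2·conj(x̃)). Then α ≠ 0, and with β = 1/conj(α) the pair (α, β) satisfies the common-inverse-point equations: α·conj(β) = 1 and (α − x̃)·conj(β − x̃) = ρ̃². -/

import Mathlib

open ComplexConjugate

/-- Common inverse points for the unit circle and the circle of center xt and
radius rt: with w² = (|xt|² + 1 − rt²)² − 4|xt|² and
α = (|xt|² + 1 − rt² + w)/(2 conj xt), the pair (α, β) with β = 1/conj α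
satisfies α·conj β = 1 and (α − xt)·conj(β − xt) = rt². -/
theorem common_inverse_points
    (xt : ℂ) (hxt : xt ≠ 0) (rt : ℝ) (w : ℂ)
    (hw : w ^ 2 = ((‖xt‖ : ℂ) ^ 2 + 1 - (rt : ℂ) ^ 2) ^ 2
        - 4 * (‖xt‖ : ℂ) ^ 2)
    (α : ℂ)
    (hα : α = ((‖xt‖ : ℂ) ^ 2 + 1 - (rt : ℂ) ^ 2 + w) / (2 * conj xt)) :
    α ≠ 0 ∧
    (∀ β : ℂ, β = 1 / conj α →
      α * conj β = 1 ∧ (α - xt) * conj (β - xt) = (rt : ℂ) ^ 2) := by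
  have hc : conj xt ≠ 0 := by simpa using hxt
  have habs : ((‖xt‖ : ℂ)) ^ 2 = xt * conj xt := by
    rw [← Complex.ofReal_pow, Complex.sq_norm, Complex.mul_conj]
  set S : ℂ := (‖xt‖ : ℂ) ^ 2 + 1 - (rt : ℂ) ^ 2 with hS
  have hα2 : α * (2 * conj xt) = S + w := by
    rw [hα]; field_simp
  have hA : (‖xt‖ : ℂ) ^ 2 ≠ 0 := by
    simpa [pow_eq_zero_iff] using hxt
  have hα0 : α ≠ 0 := by
    intro h
    rw [h, zero_mul] at hα2
    have hw0 : w = -S := by linear_combination -hα2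
    apply hA
    rw [hw0] at hw
    linear_combination hw / 4
  refine ⟨hα0, fun β hβ => ?_⟩
  have hcb : conj β = 1 / α := by
    rw [hβ, map_div₀, map_one, Complex.conj_conj]
  have key : (α - xt) * (1 - α * conj xt) = (rt : ℂ) ^ 2 * α := by
    have h2c : ((α - xt) * (1 - α * conj xt) - (rt : ℂ) ^ 2 * α) * (2 * conj xt) = 0 := by
      linear_combination (1 - α * conj xt + xt * conj xt - (rt : ℂ) ^ 2 - (S + w) / 2) * hα2
        - (1 / 2) * hw + (2 - S - w) * habs
    have := mul_eq_zero.mp h2c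
    rcases this with h | h
    · linear_combination h
    · exact absurd h (by simpa using hc)
  constructor
  · rw [hcb, mul_one_div, div_self hα0]
  · rw [map_sub, hcb]
    field_simp
    linear_combination key
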